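/- For any two symmetric real n×n matrices B₁, B₂, one has 2‖[B₁,B₂]‖² ≤ 4‖B₁‖²‖B₂‖² ≤ (‖B₁‖² + ‖B₂‖²)². -/

import Mathlib

open Matrix

noncomputable def frobSq {n : ℕ} (A : Matrix (Fin n) (Fin n) ℝ) : ℝ :=
  (Aᵀ * A).trace

def mcomm {n : ℕ} (A B : Matrix (Fin n) (Fin n) ℝ) : Matrix (Fin n) (Fin n) ℝ :=
  A * B - B * A

lemma frobSq_eq_sum {n : ℕ} (A : Matrix (Fin n) (Fin n) ℝ) :
    frobSq A = ∑ j, ∑ i, (A i j) ^ 2 := by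
  simp [frobSq, Matrix.trace, Matrix.diag, Matrix.mul_apply, sq]

lemma frobSq_conj {n : ℕ} (U M : Matrix (Fin n) (Fin n) ℝ)
    (hU : Uᵀ * U = 1) :
    frobSq (U * M * Uᵀ) = frobSq M := by
  have e1 : ∀ X : Matrix (Fin n) (Fin n) ℝ, Uᵀ * (U * X) = X := fun X => by
    rw [← Matrix.mul_assoc, hU, Matrix.one_mul]
  unfold frobSq
  have h : (U * M * Uᵀ)ᵀ * (U * M * Uᵀ) = U * (Mᵀ * (M * Uᵀ)) := by
    simp only [Matrix.transpose_mul, Matrix.transpose_transpose, Matrix.mul_assoc, e1]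
  rw [h, Matrix.trace_mul_comm]
  simp only [Matrix.mul_assoc]
  rw [show M * (Uᵀ * U) = M by rw [hU, Matrix.mul_one]]

lemma key_diag {n : ℕ} (d : Fin n → ℝ) (C : Matrix (Fin n) (Fin n) ℝ) :
    frobSq (mcomm (Matrix.diagonal d) C) ≤ 2 * (∑ k, d k ^ 2) * frobSq C := by
  have hsum : frobSq (mcomm (Matrix.diagonal d) C)
      = ∑ j, ∑ i, ((d i - d j) * C i j) ^ 2 := by
    rw [frobSq_eq_sum]
    congr 1; ext j; congr 1; ext i
    simp [mcomm, Matrix.sub_apply, Matrix.diagonal_mul, Matrix.mul_diagonal]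
    ring
  rw [hsum, frobSq_eq_sum, Finset.mul_sum]
  apply Finset.sum_le_sum
  intro j _
  rw [Finset.mul_sum]
  apply Finset.sum_le_sum
  intro i _
  rcases eq_or_ne i j with rfl | hij
  · simp only [sub_self, zero_mul, ne_eq, OfNat.ofNat_ne_zero, not_false_iff, zero_pow]
    positivity
  · have h1 : d i ^ 2 + d j ^ 2 ≤ ∑ k, d k ^ 2 := by
      have : ∑ k ∈ ({i, j} : Finset (Fin n)), d k ^ 2 ≤ ∑ k, d k ^ 2 :=
        Finset.sum_le_sum_of_subset_of_nonneg (Finset.subset_univ _)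
          (fun k _ _ => sq_nonneg _)
      rwa [Finset.sum_pair hij] at this
    have h2 : (d i - d j) ^ 2 ≤ 2 * ∑ k, d k ^ 2 := by nlinarith [sq_nonneg (d i + d j)]
    calc ((d i - d j) * C i j) ^ 2 = (d i - d j) ^ 2 * C i j ^ 2 := by ring
      _ ≤ (2 * ∑ k, d k ^ 2) * C i j ^ 2 :=
        mul_le_mul_of_nonneg_right h2 (sq_nonneg (C i j))

lemma frobSq_diagonal {n : ℕ} (d : Fin n → ℝ) :
    frobSq (Matrix.diagonal d) = ∑ k, d k ^ 2 := by
  rw [frobSq_eq_sum]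
  simp [Matrix.diagonal_apply, Finset.sum_ite_eq, sq]

theorem ddvv_m2_chain {n : ℕ} (B₁ B₂ : Matrix (Fin n) (Fin n) ℝ)
    (h₁ : B₁.IsSymm) (h₂ : B₂.IsSymm) :
    2 * frobSq (mcomm B₁ B₂) ≤ 4 * frobSq B₁ * frobSq B₂ ∧
      4 * frobSq B₁ * frobSq B₂ ≤ (frobSq B₁ + frobSq B₂) ^ 2 := by
  constructor
  · -- part 1
    have hH : B₁.IsHermitian := by
      rw [Matrix.IsHermitian, Matrix.conjTranspose_eq_transpose_of_trivial]; exact h₁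
    set U : Matrix (Fin n) (Fin n) ℝ := (hH.eigenvectorUnitary : Matrix (Fin n) (Fin n) ℝ)
      with hUdef
    have hstar : star U = Uᵀ := by
      rw [Matrix.star_eq_conjTranspose, Matrix.conjTranspose_eq_transpose_of_trivial]
    have hU1 : Uᵀ * U = 1 := by
      rw [← hstar]
      exact (Matrix.mem_unitaryGroup_iff'.mp hH.eigenvectorUnitary.2)
    have hU2 : U * Uᵀ = 1 := by
      rw [← hstar]
      exact (Matrix.mem_unitaryGroup_iff.mp hH.eigenvectorUnitary.2)
    have e1 : ∀ X : Matrix (Fin n) (Fin n) ℝ, Uᵀ * (U * X) = X := fun X => by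
      rw [← Matrix.mul_assoc, hU1, Matrix.one_mul]
    set d : Fin n → ℝ := hH.eigenvalues with hddef
    have hspec : B₁ = U * Matrix.diagonal d * Uᵀ := by
      have h := hH.spectral_theorem
      rw [Unitary.conjStarAlgAut_apply] at h
      rw [hstar] at h
      have hd : Matrix.diagonal (RCLike.ofReal ∘ hH.eigenvalues) = Matrix.diagonal d := by
        congr 1
      rw [hd] at h
      exact h
    clear_value U d
    set C : Matrix (Fin n) (Fin n) ℝ := Uᵀ * B₂ * U with hCdef
    have hB2' : B₂ = U * C * Uᵀ := by
      rw [hCdef]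
      simp only [Matrix.mul_assoc]
      rw [show Uᵀ * (B₂ * (U * Uᵀ)) = Uᵀ * B₂ by rw [hU2, Matrix.mul_one]]
      rw [← Matrix.mul_assoc, hU2, Matrix.one_mul]
    have hcomm : mcomm B₁ B₂ = U * mcomm (Matrix.diagonal d) C * Uᵀ := by
      rw [hspec, hB2', mcomm, mcomm, Matrix.mul_sub, Matrix.sub_mul]
      congr 1 <;> simp only [Matrix.mul_assoc, e1]
    have hB1 : frobSq B₁ = ∑ k, d k ^ 2 := by
      rw [hspec, frobSq_conj _ _ hU1, frobSq_diagonal]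
    have hB2 : frobSq B₂ = frobSq C := by rw [hB2', frobSq_conj _ _ hU1]
    have hkey := key_diag d C
    rw [hcomm, frobSq_conj _ _ hU1, hB1, hB2]
    linarith
  · nlinarith [sq_nonneg (frobSq B₁ - frobSq B₂)]
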